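/- arXiv:1309.7621 — 2 statements merged into one kernel-verified Lean document; each statement's English description precedes it below -/
import Mathlib

section
/- For t ≥ 0 define σ²(t) = 2∫₀ᵗ∫₀ʷ e^{-(v²+w²)/2} v dv dw. Then σ²(t) = (√2 − 1)√π − 2√(2π) Ψ(t) + 2√π Ψ(√2 t), where Ψ(x) = ∫ₓ^∞ (1/√(2π)) e^{-y²/2} dy is the standard normal survival function. -/
open Real MeasureTheory Set

lemma split_gauss {b : ℝ} (hb : 0 < b) {x : ℝ} (hx : 0 ≤ x) :
    (∫ y in (0:ℝ)..x, Real.exp (-b*y^2))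
      = (∫ y in Set.Ioi (0:ℝ), Real.exp (-b*y^2)) - ∫ y in Set.Ioi x, Real.exp (-b*y^2) := by
  rw [intervalIntegral.integral_of_le hx, ← Ioc_union_Ioi_eq_Ioi hx,
    setIntegral_union (Set.Ioc_disjoint_Ioi le_rfl) measurableSet_Ioi
      (integrable_exp_neg_mul_sq hb).integrableOn (integrable_exp_neg_mul_sq hb).integrableOn]
  ring

lemma inner_int (w : ℝ) :
    (∫ v in (0:ℝ)..w, Real.exp (-(v ^ 2 + w ^ 2) / 2) * v)
      = Real.exp (-(1/2)*w^2) - Real.exp (-1*w^2) := by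
  have key : ∀ v : ℝ, HasDerivAt (fun v : ℝ => -Real.exp (-(v ^ 2 + w ^ 2) / 2))
      (Real.exp (-(v ^ 2 + w ^ 2) / 2) * v) v := by
    intro v
    have h1 : HasDerivAt (fun v : ℝ => -(v ^ 2 + w ^ 2) / 2) (-v) v := by
      have := ((hasDerivAt_pow 2 v).add_const (w^2)).neg.div_const 2
      exact this.congr_deriv (by push_cast; ring)
    have := (h1.exp).neg
    exact this.congr_deriv (by ring)
  rw [intervalIntegral.integral_eq_sub_of_hasDerivAt (fun v _ => key v)
    (Continuous.intervalIntegrable (by continuity) 0 w)]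
  rw [show (-(w^2+w^2)/2) = -1*w^2 by ring, show (-((0:ℝ)^2+w^2)/2) = -(1/2)*w^2 by ring]
  ring

/-- Example 3 (Brownian motion loss process, discount `δ(t) = t²/2`):
explicit formula for the variance `σ²(t) = 2∫₀ᵗ∫₀ʷ e^{-(v²+w²)/2} v dv dw`,
where `Ψ` is the standard normal survival function. -/
theorem bm_variance_formula
    (Ψ : ℝ → ℝ)
    (hΨ : ∀ x, Ψ x = ∫ y in Set.Ioi x, (1 / Real.sqrt (2 * π)) * Real.exp (-y ^ 2 / 2))
    (t : ℝ) (ht : 0 ≤ t) :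
    2 * ∫ w in (0:ℝ)..t, ∫ v in (0:ℝ)..w, Real.exp (-(v ^ 2 + w ^ 2) / 2) * v
      = (Real.sqrt 2 - 1) * Real.sqrt π - 2 * Real.sqrt (2 * π) * Ψ t
        + 2 * Real.sqrt π * Ψ (Real.sqrt 2 * t) := by
  have s2 : (0:ℝ) < Real.sqrt 2 := by positivity
  have s22 : Real.sqrt 2 * Real.sqrt 2 = 2 := Real.mul_self_sqrt (by norm_num)
  have spi : Real.sqrt (2*π) = Real.sqrt 2 * Real.sqrt π := Real.sqrt_mul (by norm_num) π
  have spipos : (0:ℝ) < Real.sqrt (2*π) := by have := pi_pos; positivity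
  -- Ψ in terms of gaussian Ioi integral
  have hPsi : ∀ x, (∫ y in Set.Ioi x, Real.exp (-(1/2)*y^2)) = Real.sqrt (2*π) * Ψ x := by
    intro x
    rw [hΨ x, integral_const_mul]
    simp_rw [show ∀ y:ℝ, -(1/2)*y^2 = -y^2/2 from fun y => by ring]
    field_simp
  -- Ioi 0 gaussian integrals
  have gauss_half : (∫ y in Set.Ioi (0:ℝ), Real.exp (-(1/2)*y^2)) = Real.sqrt (2*π) / 2 := by
    rw [integral_gaussian_Ioi]
    rw [show π/(1/2) = 2*π by ring]
  -- first interval integral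
  have I1 : (∫ w in (0:ℝ)..t, Real.exp (-(1/2)*w^2))
      = Real.sqrt (2*π)/2 - Real.sqrt (2*π) * Ψ t := by
    rw [split_gauss (by norm_num) ht, gauss_half, hPsi]
  -- second: substitution
  have I2 : (∫ w in (0:ℝ)..t, Real.exp (-1*w^2))
      = (Real.sqrt 2)⁻¹ * (Real.sqrt (2*π)/2 - Real.sqrt (2*π) * Ψ (Real.sqrt 2 * t)) := by
    have comp := intervalIntegral.integral_comp_mul_left
      (fun y => Real.exp (-(1/2)*y^2)) (a := 0) (b := t) (c := Real.sqrt 2)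
    simp only [mul_zero] at comp
    have : ∀ w:ℝ, Real.exp (-(1/2)*(Real.sqrt 2 * w)^2) = Real.exp (-1*w^2) := by
      intro w; congr 1; rw [mul_pow]; rw [show Real.sqrt 2 ^2 = 2 by rw [sq]; exact s22]; ring
    simp_rw [this] at comp
    rw [comp s2.ne', split_gauss (b := (1:ℝ)/2) (by norm_num) (by positivity), gauss_half, hPsi]
    simp [smul_eq_mul]
  calc 2 * ∫ w in (0:ℝ)..t, ∫ v in (0:ℝ)..w, Real.exp (-(v ^ 2 + w ^ 2) / 2) * v
      = 2 * ∫ w in (0:ℝ)..t, (Real.exp (-(1/2)*w^2) - Real.exp (-1*w^2)) := by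
        congr 1; exact intervalIntegral.integral_congr (fun w _ => inner_int w)
    _ = 2 * ((∫ w in (0:ℝ)..t, Real.exp (-(1/2)*w^2)) - ∫ w in (0:ℝ)..t, Real.exp (-1*w^2)) := by
        rw [intervalIntegral.integral_sub
          (Continuous.intervalIntegrable (by continuity) 0 t)
          (Continuous.intervalIntegrable (by continuity) 0 t)]
    _ = _ := by
        rw [I1, I2, spi]
        field_simp
        ring
end

section
/- Let Ψ be the standard normal survival function, σ : [0,T] → (0,∞) and δ̃ : [0,T] → ℝ continuous and differentiable at T with σ'(T) > 0, c ≥ 0, x > 0, T_u = T − x u^{-2}, g_u(t) = (u + c δ̃(t))/σ(t). Then lim_{u→∞} Ψ(g_u(T_u))/Ψ(g_u(T)) = exp(−(σ'(T)/σ(T)³) x). -/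
open Real Filter MeasureTheory Set

noncomputable def Iint (v : ℝ) : ℝ := ∫ y in Set.Ioi v, Real.exp (-y ^ 2 / 2)

lemma gauss_integrable : MeasureTheory.Integrable (fun y : ℝ => Real.exp (-y ^ 2 / 2)) := by
  have := integrable_exp_neg_mul_sq (by norm_num : (0:ℝ) < 1/2)
  convert this using 2 with y
  ring_nf

lemma deriv_negexp (y : ℝ) : HasDerivAt (fun y : ℝ => -Real.exp (-y ^ 2 / 2))
    (y * Real.exp (-y ^ 2 / 2)) y := by
  have h1 : HasDerivAt (fun y : ℝ => -y ^ 2 / 2) (-y) y := by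
    have := ((hasDerivAt_pow 2 y).fun_neg).div_const 2
    refine this.congr_deriv ?_
    push_cast
    ring
  have := (h1.exp).fun_neg
  simpa [mul_comm] using this

lemma negexp_tendsto : Tendsto (fun y : ℝ => -Real.exp (-y ^ 2 / 2)) atTop (nhds 0) := by
  rw [show (0:ℝ) = -0 by ring]
  apply Tendsto.neg
  apply Real.tendsto_exp_atBot.comp
  apply Tendsto.atBot_div_const (by norm_num : (0:ℝ) < 2)
  exact tendsto_neg_atBot_iff.mpr (tendsto_pow_atTop two_ne_zero)

lemma yexp_int (v : ℝ) (hv : 0 < v) :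
    MeasureTheory.IntegrableOn (fun y : ℝ => y * Real.exp (-y ^ 2 / 2)) (Set.Ioi v) := by
  apply integrableOn_Ioi_deriv_of_nonneg' (fun y _ => deriv_negexp y)
    (fun y hy => by
      have : 0 < y := hv.trans hy
      positivity) negexp_tendsto

lemma yexp_eq (v : ℝ) (hv : 0 < v) :
    ∫ y in Set.Ioi v, y * Real.exp (-y ^ 2 / 2) = Real.exp (-v ^ 2 / 2) := by
  have := integral_Ioi_of_hasDerivAt_of_nonneg' (fun y (_ : y ∈ Set.Ici v) => deriv_negexp y)
    (fun y hy => by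
      have : 0 < y := hv.trans hy
      positivity) negexp_tendsto
  simpa using this

theorem mills_up (v : ℝ) (hv : 0 < v) : Iint v ≤ Real.exp (-v ^ 2 / 2) / v := by
  have h1 : Iint v ≤ ∫ y in Set.Ioi v, y * Real.exp (-y ^ 2 / 2) / v := by
    apply MeasureTheory.setIntegral_mono_on gauss_integrable.integrableOn
      ((yexp_int v hv).div_const v) measurableSet_Ioi
    intro y hy
    have hy' : v < y := hy
    rw [le_div_iff₀ hv]
    nlinarith [Real.exp_pos (-y^2/2)]
  calc Iint v ≤ _ := h1
    _ = Real.exp (-v ^ 2 / 2) / v := by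
        rw [MeasureTheory.integral_div, yexp_eq v hv]

lemma deriv_negexp_div (y : ℝ) (hy : 0 < y) :
    HasDerivAt (fun y : ℝ => -Real.exp (-y ^ 2 / 2) / y)
      ((1 + (y ^ 2)⁻¹) * Real.exp (-y ^ 2 / 2)) y := by
  have h := (deriv_negexp y).fun_div (hasDerivAt_id' y) hy.ne'
  refine h.congr_deriv ?_
  field_simp
  ring

lemma negexp_div_tendsto : Tendsto (fun y : ℝ => -Real.exp (-y ^ 2 / 2) / y) atTop (nhds 0) := by
  have h := negexp_tendsto.mul tendsto_inv_atTop_zero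
  rw [mul_zero] at h
  exact h.congr (fun y => (div_eq_mul_inv _ _).symm)

lemma oneexp_eq (v : ℝ) (hv : 0 < v) :
    ∫ y in Set.Ioi v, (1 + (y ^ 2)⁻¹) * Real.exp (-y ^ 2 / 2) = Real.exp (-v ^ 2 / 2) / v := by
  have := integral_Ioi_of_hasDerivAt_of_nonneg'
    (fun y (hy : y ∈ Set.Ici v) => deriv_negexp_div y (hv.trans_le hy))
    (fun y hy => by
      have : 0 < y := hv.trans hy
      positivity) negexp_div_tendsto
  rw [this]
  ring

lemma oneexp_int (v : ℝ) (hv : 0 < v) :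
    MeasureTheory.IntegrableOn (fun y : ℝ => (1 + (y ^ 2)⁻¹) * Real.exp (-y ^ 2 / 2))
      (Set.Ioi v) := by
  apply integrableOn_Ioi_deriv_of_nonneg'
    (fun y (hy : y ∈ Set.Ici v) => deriv_negexp_div y (hv.trans_le hy))
    (fun y hy => by
      have : 0 < y := hv.trans hy
      positivity) negexp_div_tendsto

theorem mills_lo (v : ℝ) (hv : 0 < v) :
    Real.exp (-v ^ 2 / 2) * (v / (v ^ 2 + 1)) ≤ Iint v := by
  have h1 : Real.exp (-v ^ 2 / 2) / v ≤ (1 + (v ^ 2)⁻¹) * Iint v := by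
    rw [← oneexp_eq v hv]
    have : (fun y : ℝ => (1 + (v ^ 2)⁻¹) * Real.exp (-y ^ 2 / 2)) =
        fun y => (1 + (v ^ 2)⁻¹) * Real.exp (-y ^ 2 / 2) := rfl
    calc ∫ y in Set.Ioi v, (1 + (y ^ 2)⁻¹) * Real.exp (-y ^ 2 / 2)
        ≤ ∫ y in Set.Ioi v, (1 + (v ^ 2)⁻¹) * Real.exp (-y ^ 2 / 2) := by
          apply MeasureTheory.setIntegral_mono_on (oneexp_int v hv)
            (gauss_integrable.integrableOn.const_mul _) measurableSet_Ioi
          intro y hy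
          have hy' : v < y := hy
          have h2 : (y ^ 2)⁻¹ ≤ (v ^ 2)⁻¹ := by
            apply inv_anti₀ (by positivity)
            nlinarith
          nlinarith [Real.exp_pos (-y^2/2)]
      _ = (1 + (v ^ 2)⁻¹) * Iint v := MeasureTheory.integral_const_mul _ _
  have hv2 : (0:ℝ) < v ^ 2 := by positivity
  have h2 := mul_le_mul_of_nonneg_right h1 hv2.le
  have h3 : Real.exp (-v ^ 2 / 2) * v ≤ Iint v * (v ^ 2 + 1) := by
    have e1 : Real.exp (-v ^ 2 / 2) / v * v ^ 2 = Real.exp (-v ^ 2 / 2) * v := by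
      field_simp
    have e2 : (1 + (v ^ 2)⁻¹) * Iint v * v ^ 2 = Iint v * (v ^ 2 + 1) := by
      field_simp
    rw [e1, e2] at h2
    exact h2
  rw [← mul_div_assoc, div_le_iff₀ (by positivity : (0:ℝ) < v ^ 2 + 1)]
  linarith

lemma Iint_pos (v : ℝ) (hv : 0 < v) : 0 < Iint v :=
  lt_of_lt_of_le (by positivity) (mills_lo v hv)

lemma tendsto_t_div_t_add_one : Tendsto (fun t : ℝ => t / (t + 1)) atTop (nhds 1) := by
  have h := tendsto_inv_atTop_zero.comp (tendsto_atTop_add_const_right atTop (1:ℝ) tendsto_id)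
  have h2 : Tendsto (fun t : ℝ => 1 - (t + 1)⁻¹) atTop (nhds 1) := by
    simpa using tendsto_const_nhds.sub h
  apply h2.congr'
  filter_upwards [eventually_gt_atTop 0] with t ht
  have h1 : t + 1 ≠ 0 := by linarith
  field_simp
  ring

lemma tendsto_t_add_one_div_t : Tendsto (fun t : ℝ => (t + 1) / t) atTop (nhds 1) := by
  have h2 : Tendsto (fun t : ℝ => 1 + t⁻¹) atTop (nhds 1) := by
    have := (tendsto_const_nhds (x := (1:ℝ)) (f := atTop (α := ℝ))).add tendsto_inv_atTop_zero
    simpa using this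
  apply h2.congr'
  filter_upwards [eventually_gt_atTop 0] with t ht
  field_simp

set_option maxHeartbeats 2000000 in
/-- Exponential limit of the ratio of survival-function values (Theorem 2):
with `T_u = T - x u⁻²` and `g_u(t) = (u + c δ̃(t))/σ(t)`,
`Ψ(g_u(T_u))/Ψ(g_u(T)) → exp(-(σ'(T)/σ(T)³) x)` as `u → ∞`. -/
theorem psi_ratio_limit
    (Ψ : ℝ → ℝ)
    (hΨ : ∀ x, Ψ x = ∫ y in Set.Ioi x, (1 / Real.sqrt (2 * π)) * Real.exp (-y ^ 2 / 2))
    (T x c σT' : ℝ) (σ δt : ℝ → ℝ)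
    (hT : 0 < T) (hx : 0 < x) (hc : 0 ≤ c)
    (hσpos : ∀ t ∈ Set.Icc (0:ℝ) T, 0 < σ t)
    (hσcont : ContinuousOn σ (Set.Icc 0 T))
    (hσd : HasDerivAt σ σT' T) (hσT' : 0 < σT')
    (hδcont : ContinuousOn δt (Set.Icc 0 T))
    (hδd : DifferentiableAt ℝ δt T) :
    Tendsto (fun u : ℝ =>
        Ψ ((u + c * δt (T - x / u ^ 2)) / σ (T - x / u ^ 2))
          / Ψ ((u + c * δt T) / σ T))
      atTop (nhds (Real.exp (-(σT' / σ T ^ 3) * x))) := by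
  have hσT : 0 < σ T := hσpos T ⟨hT.le, le_rfl⟩
  set C : ℝ := 1 / Real.sqrt (2 * π) with hC
  have hCpos : 0 < C := by
    have h2π : 0 < Real.sqrt (2 * π) := Real.sqrt_pos.2 (by positivity)
    positivity
  have hΨI : ∀ v, Ψ v = C * Iint v := by
    intro v
    rw [hΨ v, Iint, MeasureTheory.integral_const_mul]
  set V : ℝ → ℝ := fun u => (u + c * δt (T - x / u ^ 2)) / σ (T - x / u ^ 2) with hV
  set W : ℝ → ℝ := fun u => (u + c * δt T) / σ T with hW
  set L : ℝ := Real.exp (-(σT' / σ T ^ 3) * x) with hL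
  -- T_u → T
  have hsq : Tendsto (fun u : ℝ => x / u ^ 2) atTop (nhds 0) := by
    have h := ((tendsto_pow_atTop (two_ne_zero)).inv_tendsto_atTop).const_mul x
    simpa [div_eq_mul_inv] using h
  have hTu : Tendsto (fun u : ℝ => T - x / u ^ 2) atTop (nhds T) := by
    simpa using tendsto_const_nhds.sub hsq
  have hTu' : Tendsto (fun u : ℝ => T - x / u ^ 2) atTop (nhdsWithin T {T}ᶜ) := by
    apply tendsto_nhdsWithin_of_tendsto_nhds_of_eventually_within _ hTu
    filter_upwards [eventually_gt_atTop 0] with u hu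
    have hx2 : 0 < x / u ^ 2 := by positivity
    simp only [Set.mem_compl_iff, Set.mem_singleton_iff]
    intro h
    nlinarith
  -- continuity facts
  have hσcA : Tendsto (fun u : ℝ => σ (T - x / u ^ 2)) atTop (nhds (σ T)) :=
    hσd.continuousAt.tendsto.comp hTu
  have hδcA : Tendsto (fun u : ℝ => δt (T - x / u ^ 2)) atTop (nhds (δt T)) :=
    hδd.continuousAt.tendsto.comp hTu
  have hσTu : ∀ᶠ u in atTop, 0 < σ (T - x / u ^ 2) :=
    hσcA.eventually (eventually_gt_nhds hσT)
  -- derivative facts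
  have hσ2 : (σ T) ^ 2 ≠ 0 := pow_ne_zero _ hσT.ne'
  set fd : ℝ := -((2 : ℕ) * σ T ^ 1 * σT') / ((σ T) ^ 2) ^ 2 with hfdv
  have hfd : HasDerivAt (fun t => ((σ t) ^ 2)⁻¹) fd T := (hσd.pow 2).inv hσ2
  have hgd : DifferentiableAt ℝ (fun t => δt t * ((σ t) ^ 2)⁻¹) T :=
    hδd.mul hfd.differentiableAt
  have hhd : DifferentiableAt ℝ (fun t => (δt t) ^ 2 * ((σ t) ^ 2)⁻¹) T :=
    (hδd.pow 2).mul hfd.differentiableAt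
  -- term 1
  have hslf : Tendsto (fun u : ℝ => slope (fun t => ((σ t) ^ 2)⁻¹) T (T - x / u ^ 2))
      atTop (nhds fd) := (hasDerivAt_iff_tendsto_slope.1 hfd).comp hTu'
  have hterm1 : Tendsto (fun u : ℝ =>
      u ^ 2 * (((σ (T - x / u ^ 2)) ^ 2)⁻¹ - ((σ T) ^ 2)⁻¹)) atTop (nhds (-x * fd)) := by
    have h := hslf.mul_const (-x)
    rw [show fd * -x = -x * fd by ring] at h
    apply h.congr'
    filter_upwards [eventually_gt_atTop 0] with u hu
    rw [slope_def_field]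
    have he : T - x / u ^ 2 - T = -(x / u ^ 2) := by ring
    rw [he]
    field_simp
  -- term 2
  have hslg : Tendsto (fun u : ℝ => slope (fun t => δt t * ((σ t) ^ 2)⁻¹) T (T - x / u ^ 2))
      atTop (nhds (deriv (fun t => δt t * ((σ t) ^ 2)⁻¹) T)) :=
    (hasDerivAt_iff_tendsto_slope.1 hgd.hasDerivAt).comp hTu'
  have hxu : Tendsto (fun u : ℝ => -x / u) atTop (nhds 0) := by
    have h := tendsto_inv_atTop_zero.const_mul (-x)
    simpa [div_eq_mul_inv] using h
  have hterm2 : Tendsto (fun u : ℝ =>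
      u * (δt (T - x / u ^ 2) * ((σ (T - x / u ^ 2)) ^ 2)⁻¹ - δt T * ((σ T) ^ 2)⁻¹))
      atTop (nhds 0) := by
    have h := hslg.mul hxu
    rw [mul_zero] at h
    apply h.congr'
    filter_upwards [eventually_gt_atTop 0] with u hu
    rw [slope_def_field]
    have he : T - x / u ^ 2 - T = -(x / u ^ 2) := by ring
    rw [he]
    field_simp
  -- term 3
  have hterm3 : Tendsto (fun u : ℝ =>
      (δt (T - x / u ^ 2)) ^ 2 * ((σ (T - x / u ^ 2)) ^ 2)⁻¹ - (δt T) ^ 2 * ((σ T) ^ 2)⁻¹)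
      atTop (nhds 0) := by
    have h := (hhd.continuousAt.tendsto.comp hTu).sub_const ((δt T) ^ 2 * ((σ T) ^ 2)⁻¹)
    simpa using h
  -- combine: V² - W² → 2(σT'/σT³)x
  have hE : Tendsto (fun u : ℝ => (V u) ^ 2 - (W u) ^ 2) atTop
      (nhds (2 * (σT' / σ T ^ 3) * x)) := by
    have hsum := hterm1.add ((hterm2.const_mul (2 * c)).add (hterm3.const_mul (c ^ 2)))
    have hval : -x * fd + (2 * c * 0 + c ^ 2 * 0) = 2 * (σT' / σ T ^ 3) * x := by
      rw [hfdv]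
      field_simp
      ring
    rw [hval] at hsum
    apply hsum.congr'
    filter_upwards [hσTu, eventually_gt_atTop 0] with u hσu hu
    rw [hV, hW]
    have hσu' : σ (T - x / u ^ 2) ≠ 0 := hσu.ne'
    field_simp
    ring
  -- exp part
  have hexp : Tendsto (fun u : ℝ => Real.exp (((W u) ^ 2 - (V u) ^ 2) / 2)) atTop (nhds L) := by
    have h := (hE.neg.div_const 2)
    have h2 : Tendsto (fun u : ℝ => ((W u) ^ 2 - (V u) ^ 2) / 2) atTop
        (nhds (-(σT' / σ T ^ 3) * x)) := by
      have he : -(2 * (σT' / σ T ^ 3) * x) / 2 = -(σT' / σ T ^ 3) * x := by ring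
      rw [he] at h
      apply h.congr
      intro u
      ring
    exact (Real.continuous_exp.tendsto _).comp h2
  -- V, W → ∞
  have hVtop : Tendsto V atTop atTop := by
    have hnum : Tendsto (fun u : ℝ => u + c * δt (T - x / u ^ 2)) atTop atTop := by
      apply tendsto_atTop_mono' _ _ (tendsto_atTop_add_const_right atTop (c * δt T - 1) tendsto_id)
      filter_upwards [(hδcA.const_mul c).eventually
        (eventually_gt_nhds (by linarith : c * δt T - 1 < c * δt T))] with u hu
      simp only [id]
      linarith
    have hinvσ : Tendsto (fun u : ℝ => (σ (T - x / u ^ 2))⁻¹) atTop (nhds (σ T)⁻¹) :=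
      hσcA.inv₀ hσT.ne'
    have := hnum.atTop_mul_pos (by positivity : (0:ℝ) < (σ T)⁻¹) hinvσ
    apply this.congr
    intro u
    rw [hV]
    exact (div_eq_mul_inv _ _).symm
  have hWtop : Tendsto W atTop atTop := by
    have := (tendsto_atTop_add_const_right atTop (c * δt T) tendsto_id).atTop_div_const hσT
    exact this.congr (fun u => by simp [hW])
  have hVpos : ∀ᶠ u in atTop, 0 < V u := hVtop.eventually (eventually_gt_atTop 0)
  have hWpos : ∀ᶠ u in atTop, 0 < W u := hWtop.eventually (eventually_gt_atTop 0)
  -- ratio W/V → 1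
  have hVu : Tendsto (fun u : ℝ => V u / u) atTop (nhds (σ T)⁻¹) := by
    have hb : Tendsto (fun u : ℝ => c * δt (T - x / u ^ 2) * u⁻¹) atTop (nhds 0) := by
      have h := (hδcA.const_mul c).mul tendsto_inv_atTop_zero
      simpa using h
    have h1 : Tendsto (fun u : ℝ => 1 + c * δt (T - x / u ^ 2) * u⁻¹) atTop (nhds 1) := by
      simpa using tendsto_const_nhds.add hb
    have h2 := h1.mul (hσcA.inv₀ hσT.ne')
    rw [one_mul] at h2
    apply h2.congr'
    filter_upwards [eventually_gt_atTop 0, hσTu] with u hu hσu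
    rw [hV]
    field_simp
  have hWu : Tendsto (fun u : ℝ => W u / u) atTop (nhds (σ T)⁻¹) := by
    have hb : Tendsto (fun u : ℝ => c * δt T * u⁻¹) atTop (nhds 0) := by
      simpa using tendsto_inv_atTop_zero.const_mul (c * δt T)
    have h1 : Tendsto (fun u : ℝ => 1 + c * δt T * u⁻¹) atTop (nhds 1) := by
      simpa using tendsto_const_nhds.add hb
    have h2 := h1.mul (tendsto_const_nhds (x := (σ T)⁻¹))
    rw [one_mul] at h2
    apply h2.congr'
    filter_upwards [eventually_gt_atTop 0] with u hu
    rw [hW]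
    field_simp
  have hrat : Tendsto (fun u : ℝ => W u / V u) atTop (nhds 1) := by
    have h := hWu.div hVu (inv_ne_zero hσT.ne')
    rw [div_self (inv_ne_zero hσT.ne')] at h
    apply h.congr'
    filter_upwards [eventually_gt_atTop 0] with u hu
    exact div_div_div_cancel_right₀ (hu.ne' : u ≠ 0) _ _
  -- the two quotient corrections → 1
  have hq1 : Tendsto (fun u : ℝ => (V u) ^ 2 / ((V u) ^ 2 + 1)) atTop (nhds 1) :=
    tendsto_t_div_t_add_one.comp ((tendsto_pow_atTop two_ne_zero).comp hVtop)
  have hq2 : Tendsto (fun u : ℝ => ((W u) ^ 2 + 1) / (W u) ^ 2) atTop (nhds 1) :=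
    tendsto_t_add_one_div_t.comp ((tendsto_pow_atTop two_ne_zero).comp hWtop)
  -- squeeze
  have Tlow : Tendsto (fun u : ℝ => Real.exp (((W u) ^ 2 - (V u) ^ 2) / 2) *
      ((W u / V u) * ((V u) ^ 2 / ((V u) ^ 2 + 1)))) atTop (nhds L) := by
    have := hexp.mul (hrat.mul hq1)
    simpa using this
  have Tup : Tendsto (fun u : ℝ => Real.exp (((W u) ^ 2 - (V u) ^ 2) / 2) *
      ((W u / V u) * (((W u) ^ 2 + 1) / (W u) ^ 2))) atTop (nhds L) := by
    have := hexp.mul (hrat.mul hq2)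
    simpa using this
  apply tendsto_of_tendsto_of_tendsto_of_le_of_le' Tlow Tup
  · -- lower bound ≤ ratio
    filter_upwards [hVpos, hWpos] with u hVu0 hWu0
    have hratio : Ψ (V u) / Ψ (W u) = Iint (V u) / Iint (W u) := by
      rw [hΨI, hΨI, mul_div_mul_left _ _ hCpos.ne']
    rw [hratio]
    have hb1 : Real.exp (-(V u) ^ 2 / 2) * (V u / ((V u) ^ 2 + 1)) ≤ Iint (V u) :=
      mills_lo _ hVu0
    have hb2 : Iint (W u) ≤ Real.exp (-(W u) ^ 2 / 2) / W u := mills_up _ hWu0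
    have hb2' : 0 < Iint (W u) := Iint_pos _ hWu0
    have key : Real.exp (((W u) ^ 2 - (V u) ^ 2) / 2) *
        ((W u / V u) * ((V u) ^ 2 / ((V u) ^ 2 + 1))) =
        (Real.exp (-(V u) ^ 2 / 2) * (V u / ((V u) ^ 2 + 1))) /
          (Real.exp (-(W u) ^ 2 / 2) / W u) := by
      rw [show ((W u) ^ 2 - (V u) ^ 2) / 2 = -(V u) ^ 2 / 2 - (-(W u) ^ 2 / 2) by ring,
        Real.exp_sub]
      have hVne : V u ≠ 0 := hVu0.ne'
      have hWne : W u ≠ 0 := hWu0.ne'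
      have hEW : Real.exp (-(W u) ^ 2 / 2) ≠ 0 := (Real.exp_pos _).ne'
      have hV1 : (V u) ^ 2 + 1 ≠ 0 := by positivity
      field_simp
    rw [key]
    exact div_le_div₀ (le_trans (by positivity) hb1) hb1 hb2' hb2
  · -- ratio ≤ upper bound
    filter_upwards [hVpos, hWpos] with u hVu0 hWu0
    have hratio : Ψ (V u) / Ψ (W u) = Iint (V u) / Iint (W u) := by
      rw [hΨI, hΨI, mul_div_mul_left _ _ hCpos.ne']
    rw [hratio]
    have hb1 : Iint (V u) ≤ Real.exp (-(V u) ^ 2 / 2) / V u := mills_up _ hVu0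
    have hb2 : Real.exp (-(W u) ^ 2 / 2) * (W u / ((W u) ^ 2 + 1)) ≤ Iint (W u) :=
      mills_lo _ hWu0
    have hb2pos : 0 < Real.exp (-(W u) ^ 2 / 2) * (W u / ((W u) ^ 2 + 1)) := by positivity
    have key : Real.exp (((W u) ^ 2 - (V u) ^ 2) / 2) *
        ((W u / V u) * (((W u) ^ 2 + 1) / (W u) ^ 2)) =
        (Real.exp (-(V u) ^ 2 / 2) / V u) /
          (Real.exp (-(W u) ^ 2 / 2) * (W u / ((W u) ^ 2 + 1))) := by
      rw [show ((W u) ^ 2 - (V u) ^ 2) / 2 = -(V u) ^ 2 / 2 - (-(W u) ^ 2 / 2) by ring,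
        Real.exp_sub]
      have hVne : V u ≠ 0 := hVu0.ne'
      have hWne : W u ≠ 0 := hWu0.ne'
      have hEW : Real.exp (-(W u) ^ 2 / 2) ≠ 0 := (Real.exp_pos _).ne'
      have hW1 : (W u) ^ 2 + 1 ≠ 0 := by positivity
      field_simp
    rw [key]
    exact div_le_div₀ (by positivity) hb1 hb2pos hb2
end
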